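/- Let X be a finite set of n points in a metric space, C a finite set of centers, and m ≤ n a nonnegative integer. Then the robust k-median cost with m outliers satisfies cost^{(m)}(X,C) = ∫₀^∞ max(|X ∖ B(C,u)| − m, 0) du, where B(C,u) = {x : dist(x,C) ≤ u}. -/

import Mathlib

open Metric MeasureTheory

/-- The robust `k`-median cost with `m` outliers: the minimum over all `m`-point
subsets `L ⊆ X` of the total distance of `X ∖ L` to the center set `C`. -/
noncomputable def robustCostOut {M : Type*} [MetricSpace M] [DecidableEq M]
    (X C : Finset M) (m : ℕ) : ℝ :=
  sInf {c : ℝ | ∃ L ⊆ X, L.card = m ∧ c = ∑ x ∈ X \ L, Metric.infDist x (C : Set M)}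

/-- Integral representation of the robust `k`-median cost with `m` outliers:
`cost^{(m)}(X,C) = ∫₀^∞ max(|X ∖ B(C,u)| − m, 0) du`. -/
theorem robust_cost_integral_representation {M : Type*} [MetricSpace M] [DecidableEq M]
    (X C : Finset M) (hC : C.Nonempty) (m : ℕ) (hm : m ≤ X.card) :
    robustCostOut X C m =
      ∫ u in Set.Ioi (0 : ℝ),
        max (((X.filter (fun x => u < Metric.infDist x (C : Set M))).card : ℝ) - (m : ℝ)) 0 := by
  classical
  set d : M → ℝ := fun x => Metric.infDist x (C : Set M) with hd
  have hd0 : ∀ x, 0 ≤ d x := fun x => Metric.infDist_nonneg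
  -- a maximizing m-subset L₀
  obtain ⟨Lex, hLexsub, hLexcard⟩ := Finset.exists_subset_card_eq hm
  obtain ⟨L₀, hL₀mem, hmax⟩ := Finset.exists_max_image (X.powersetCard m)
    (fun L => ∑ x ∈ L, d x) ⟨Lex, Finset.mem_powersetCard.2 ⟨hLexsub, hLexcard⟩⟩
  obtain ⟨hL₀sub, hL₀card⟩ := Finset.mem_powersetCard.1 hL₀mem
  -- exchange argument
  have hexch : ∀ u : ℝ, ∀ x ∈ X \ L₀, u < d x → ∀ y ∈ L₀, u < d y := by
    intro u x hx hux y hy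
    by_contra hyu
    push_neg at hyu
    have hxX : x ∈ X := (Finset.mem_sdiff.1 hx).1
    have hxL : x ∉ L₀ := (Finset.mem_sdiff.1 hx).2
    have hxe : x ∉ L₀.erase y := fun h => hxL (Finset.mem_of_mem_erase h)
    set L' := insert x (L₀.erase y) with hL'
    have hL'sub : L' ⊆ X := by
      intro z hz
      rcases Finset.mem_insert.1 hz with rfl | hz
      · exact hxX
      · exact hL₀sub (Finset.mem_of_mem_erase hz)
    have hmpos : 0 < m := hL₀card ▸ Finset.card_pos.2 ⟨y, hy⟩
    have hL'card : L'.card = m := by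
      rw [hL', Finset.card_insert_of_notMem hxe, Finset.card_erase_of_mem hy, hL₀card]
      omega
    have h1 : ∑ z ∈ L', d z = d x + ∑ z ∈ L₀.erase y, d z := Finset.sum_insert hxe
    have h2 : d y + ∑ z ∈ L₀.erase y, d z = ∑ z ∈ L₀, d z := Finset.add_sum_erase _ _ hy
    have hlt : ∑ z ∈ L₀, d z < ∑ z ∈ L', d z := by
      have : d y < d x := lt_of_le_of_lt hyu hux
      rw [h1, ← h2]; linarith
    exact absurd (hmax L' (Finset.mem_powersetCard.2 ⟨hL'sub, hL'card⟩)) (not_le.2 hlt)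
  -- the value of the infimum
  have hval : robustCostOut X C m = ∑ x ∈ X \ L₀, d x := by
    unfold robustCostOut
    have hbdd : BddBelow {c : ℝ | ∃ L ⊆ X, L.card = m ∧ c = ∑ x ∈ X \ L, d x} := by
      refine ⟨0, ?_⟩
      rintro c ⟨L, hL, hcard, rfl⟩
      exact Finset.sum_nonneg fun x _ => hd0 x
    apply le_antisymm
    · exact csInf_le hbdd ⟨L₀, hL₀sub, hL₀card, rfl⟩
    · refine le_csInf ⟨_, L₀, hL₀sub, hL₀card, rfl⟩ ?_
      rintro c ⟨L, hL, hcard, rfl⟩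
      have h1 : ∑ x ∈ X \ L₀, d x + ∑ x ∈ L₀, d x = ∑ x ∈ X, d x := Finset.sum_sdiff hL₀sub
      have h2 : ∑ x ∈ X \ L, d x + ∑ x ∈ L, d x = ∑ x ∈ X, d x := Finset.sum_sdiff hL
      have h3 : ∑ x ∈ L, d x ≤ ∑ x ∈ L₀, d x := hmax L (Finset.mem_powersetCard.2 ⟨hL, hcard⟩)
      linarith
  -- pointwise identity on Ioi 0
  have hpt : Set.EqOn
      (fun u : ℝ => max (((X.filter (fun x => u < d x)).card : ℝ) - (m : ℝ)) 0)
      (fun u : ℝ => ∑ x ∈ X \ L₀, Set.indicator (Set.Ioo 0 (d x)) (fun _ => (1 : ℝ)) u)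
      (Set.Ioi 0) := by
    intro u hu
    have hu0 : (0 : ℝ) < u := hu
    simp only
    have hsum : ∑ x ∈ X \ L₀, Set.indicator (Set.Ioo 0 (d x)) (fun _ => (1 : ℝ)) u
        = (((X \ L₀).filter (fun x => u < d x)).card : ℝ) := by
      rw [Finset.card_filter]
      push_cast
      refine Finset.sum_congr rfl fun x hx => ?_
      by_cases h : u < d x
      · rw [Set.indicator_of_mem (Set.mem_Ioo.2 ⟨hu0, h⟩), if_pos h]
      · rw [Set.indicator_of_notMem (fun hmem => h hmem.2), if_neg h]
    rw [hsum]
    -- combinatorics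
    set P : M → Prop := fun x => u < d x with hP
    have hNsplit : (X.filter P).card
        = (L₀.filter P).card + ((X \ L₀).filter P).card := by
      rw [← Finset.card_union_of_disjoint
        (Finset.disjoint_filter_filter (Finset.disjoint_sdiff)),
        ← Finset.filter_union, Finset.union_sdiff_of_subset hL₀sub]
    rcases Nat.eq_zero_or_pos ((X \ L₀).filter P).card with hb | hb
    · rw [hb] at hNsplit ⊢
      have ha : (L₀.filter P).card ≤ m := hL₀card ▸ Finset.card_filter_le _ _
      have : (X.filter P).card ≤ m := by omega
      rw [max_eq_right]
      · norm_num
      · have : ((X.filter P).card : ℝ) ≤ (m : ℝ) := by exact_mod_cast this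
        linarith
    · obtain ⟨x, hx⟩ := Finset.card_pos.1 hb
      have hxmem := Finset.mem_filter.1 hx
      have hall : L₀.filter P = L₀ :=
        Finset.filter_true_of_mem fun y hy => hexch u x hxmem.1 hxmem.2 y hy
      rw [hall, hL₀card] at hNsplit
      rw [hNsplit]
      rw [max_eq_left]
      · push_cast; ring
      · push_cast; linarith [Nat.cast_nonneg (α := ℝ) ((X \ L₀).filter P).card]
  rw [hval, MeasureTheory.setIntegral_congr_fun measurableSet_Ioi hpt,
    MeasureTheory.integral_finset_sum]
  · refine Finset.sum_congr rfl fun x _ => ?_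
    rw [MeasureTheory.setIntegral_indicator measurableSet_Ioo,
      Set.inter_eq_self_of_subset_right Set.Ioo_subset_Ioi_self,
      MeasureTheory.setIntegral_const, measureReal_def, Real.volume_Ioo]
    simp [ENNReal.toReal_ofReal, hd0 x]
  · intro x _
    rw [integrable_indicator_iff measurableSet_Ioo]
    refine integrableOn_const (ne_of_lt ?_)
    exact measure_Ioo_lt_top
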